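/- Let {h_1^{no}, h_2^{no}, ...} be the occurrences tracked greedily by taking at each stage the earliest transiting occurrence of α that starts after the end of the previously tracked occurrence (starting from the beginning of the sequence). Then for any set {h'_1 <⋆ ... <⋆ h'_l} of pairwise non-overlapped occurrences of α, we have h_i^{no}(v_N) ≤ h'_i(v_N) for all i ≤ l, and in particular the greedy set is a maximum-cardinality pairwise non-overlapped set of occurrences. -/

import Mathlib

variable {A : Type}

/-- An occurrence of the (N+1)-node serial episode `α` in the event sequence
`E` (of length `n`): a strictly increasing index map matching the event-types. -/
def IsOcc (E : ℕ → A) (n : ℕ) {N : ℕ} (α : Fin (N+1) → A) (h : Fin (N+1) → ℕ) : Prop :=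
  StrictMono h ∧ (∀ i, h i < n) ∧ (∀ i, E (h i) = α i)

/-- Earliest transiting occurrence: each `h i.succ` is the least index after
`h i.castSucc` carrying event-type `α i.succ`. -/
def IsET (E : ℕ → A) (n : ℕ) {N : ℕ} (α : Fin (N+1) → A) (h : Fin (N+1) → ℕ) : Prop :=
  IsOcc E n α h ∧ ∀ (i : Fin N) (j : ℕ), h i.castSucc < j → E j = α i.succ → h i.succ ≤ j

/-- Lexicographic order on occurrences. -/
def OccLex {N : ℕ} (h1 h2 : Fin (N+1) → ℕ) : Prop :=
  ∃ i, (∀ k < i, h1 k = h2 k) ∧ h1 i < h2 i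

/-- The window `[a, b]` contains an occurrence of `α`. -/
def WindowHasOcc (E : ℕ → A) (n : ℕ) {N : ℕ} (α : Fin (N+1) → A) (a b : ℕ) : Prop :=
  ∃ h, IsOcc E n α h ∧ a ≤ h 0 ∧ h (Fin.last N) ≤ b

/-- `[a, b]` is a minimal window of `α`: it contains an occurrence and no
proper subwindow contains one. -/
def IsMinWindow (E : ℕ → A) (n : ℕ) {N : ℕ} (α : Fin (N+1) → A) (a b : ℕ) : Prop :=
  WindowHasOcc E n α a b ∧
    ∀ c d, a ≤ c → d ≤ b → (a < c ∨ d < b) → ¬ WindowHasOcc E n α c d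

/-- A minimal occurrence: its window is a minimal window. -/
def IsMinOcc (E : ℕ → A) (n : ℕ) {N : ℕ} (α : Fin (N+1) → A) (h : Fin (N+1) → ℕ) : Prop :=
  IsOcc E n α h ∧ IsMinWindow E n α (h 0) (h (Fin.last N))

/-- `h'` is the earliest transiting occurrence immediately following `h`
in the lexicographic enumeration of earliest transiting occurrences. -/
def NextET (E : ℕ → A) (n : ℕ) {N : ℕ} (α : Fin (N+1) → A) (h h' : Fin (N+1) → ℕ) : Prop :=
  IsET E n α h ∧ IsET E n α h' ∧ OccLex h h' ∧
    ¬ ∃ g, IsET E n α g ∧ OccLex h g ∧ OccLex g h'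

/-- `h1 <⋆ h2` are non-interleaved: `h2 (v_j) ≥ h1 (v_{j+1})` for all `j < N`. -/
def NonInterleaved {N : ℕ} (h1 h2 : Fin (N+1) → ℕ) : Prop :=
  ∀ i : Fin N, h1 i.succ ≤ h2 i.castSucc

/-- Non-overlapped occurrences: one ends strictly before the other begins. -/
def NonOverlapped {N : ℕ} (h1 h2 : Fin (N+1) → ℕ) : Prop :=
  h1 (Fin.last N) < h2 0 ∨ h2 (Fin.last N) < h1 0

/-- The greedy sequence `h 0, …, h (f-1)` of non-overlapped occurrences: each
is the earliest transiting occurrence that starts after the end of the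
previous one, and no occurrence starts after the end of the last one. -/
def GreedyNO (E : ℕ → A) (n : ℕ) {N : ℕ} (α : Fin (N+1) → A)
    (f : ℕ) (h : ℕ → Fin (N+1) → ℕ) : Prop :=
  (∀ i < f, IsET E n α (h i)) ∧
  (0 < f → ∀ g, IsOcc E n α g → ¬ OccLex g (h 0)) ∧
  (∀ i, i + 1 < f → h i (Fin.last N) < h (i+1) 0 ∧
    ∀ g, IsOcc E n α g → h i (Fin.last N) < g 0 → ¬ OccLex g (h (i+1))) ∧
  (∀ g, IsOcc E n α g → 0 < f ∧ g 0 ≤ h (f-1) (Fin.last N))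


lemma occLex_zero {N : ℕ} {h1 h2 : Fin (N+1) → ℕ} (H : OccLex h1 h2) : h1 0 ≤ h2 0 := by
  obtain ⟨j, he, hl⟩ := H
  rcases eq_or_ne j 0 with rfl | hj
  · exact hl.le
  · exact (he 0 (Fin.pos_of_ne_zero hj)).le

lemma not_occLex_zero {N : ℕ} {g h0 : Fin (N+1) → ℕ} (H : ¬ OccLex g h0) : h0 0 ≤ g 0 := by
  by_contra hc
  exact H ⟨0, fun k hk => absurd hk (Fin.not_lt_zero k), Nat.lt_of_not_le hc⟩

lemma et_mono {E : ℕ → A} {n N : ℕ} {α : Fin (N+1) → A} {h g : Fin (N+1) → ℕ}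
    (hET : IsET E n α h) (hgo : IsOcc E n α g) (h0 : h 0 ≤ g 0) : ∀ k, h k ≤ g k := by
  intro k
  induction k using Fin.induction with
  | zero => exact h0
  | succ i ih =>
    exact hET.2 i (g i.succ) (lt_of_le_of_lt ih (hgo.1 (Fin.castSucc_lt_succ (i := i)))) (hgo.2.2 i.succ)

lemma no_start {N : ℕ} {h1 h2 : Fin (N+1) → ℕ} (h2m : StrictMono h2)
    (hlex : OccLex h1 h2) (hno : NonOverlapped h1 h2) : h1 (Fin.last N) < h2 0 := by
  rcases hno with H | H
  · exact H
  · have h1' := occLex_zero hlex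
    have : h2 0 ≤ h2 (Fin.last N) := (h2m.monotone (Fin.zero_le _))
    omega

theorem stmt18 (E : ℕ → A) (n : ℕ) {N : ℕ} (α : Fin (N+1) → A)
    (f : ℕ) (h : ℕ → Fin (N+1) → ℕ) (hg : GreedyNO E n α f h)
    (l : ℕ) (h' : ℕ → Fin (N+1) → ℕ)
    (hocc' : ∀ i < l, IsOcc E n α (h' i))
    (hlex' : ∀ i j, i < j → j < l → OccLex (h' i) (h' j))
    (hno' : ∀ i j, i < j → j < l → NonOverlapped (h' i) (h' j)) :
    l ≤ f ∧ ∀ i < l, h i (Fin.last N) ≤ h' i (Fin.last N) := by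
  have key : ∀ i, i < l → i < f ∧ h i (Fin.last N) ≤ h' i (Fin.last N) := by
    intro i
    induction i with
    | zero =>
      intro hl
      have fpos := (hg.2.2.2 (h' 0) (hocc' 0 hl)).1
      have hnl := hg.2.1 fpos (h' 0) (hocc' 0 hl)
      have h00 := not_occLex_zero hnl
      exact ⟨fpos, et_mono (hg.1 0 fpos) (hocc' 0 hl) h00 (Fin.last N)⟩
    | succ i ih =>
      intro hl
      obtain ⟨hif, hile⟩ := ih (Nat.lt_of_succ_lt hl)
      have hocc1 := hocc' (i+1) hl
      have hstart : h i (Fin.last N) < h' (i+1) 0 := by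
        have := no_start (hocc1.1) (hlex' i (i+1) (Nat.lt_succ_self i) hl)
          (hno' i (i+1) (Nat.lt_succ_self i) hl)
        omega
      have hf1 : i + 1 < f := by
        by_contra hc
        have hfe : f - 1 = i := by omega
        have := (hg.2.2.2 (h' (i+1)) hocc1).2
        rw [hfe] at this
        omega
      have hnl := (hg.2.2.1 i hf1).2 (h' (i+1)) hocc1 hstart
      have h00 := not_occLex_zero hnl
      exact ⟨hf1, et_mono (hg.1 (i+1) hf1) hocc1 h00 (Fin.last N)⟩
  constructor
  · rcases Nat.eq_zero_or_pos l with rfl | hl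
    · exact Nat.zero_le f
    · have := (key (l-1) (by omega)).1
      omega
  · exact fun i hi => (key i hi).2
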